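/- Let λ and μ be weak compositions with |λ| = |μ|. Then μ is the content of a weak composition tableau of shape λ if and only if flatt(μ) refines flatt(λ) and μ dominates λ. -/

import Mathlib

/-!
STATEMENT 1: Let λ and μ be weak compositions with |λ| = |μ|. Then μ is the content of a
weak composition tableau of shape λ if and only if flatt(μ) refines flatt(λ) and
μ dominates λ.
-/

open scoped Classical

/-- The flattening of a weak composition: delete all zero entries. -/
def flatt (l : List ℕ) : List ℕ := l.filter (· ≠ 0)

/-- `Refines lam mu` : the composition `lam` refines the composition `mu`. -/
def Refines (lam mu : List ℕ) : Prop :=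
  ∃ L : List (List ℕ), (∀ b ∈ L, b ≠ []) ∧ L.flatten = lam ∧ L.map List.sum = mu

/-- `Dominates lam mu` : `lam` dominates `mu`, i.e. `lam_1 + ⋯ + lam_i ≥ mu_1 + ⋯ + mu_i`
for all `i`. -/
def Dominates (lam mu : List ℕ) : Prop :=
  ∀ i : ℕ, (mu.take i).sum ≤ (lam.take i).sum

/-- The boxes of the Young diagram of a (weak) composition `lam`. -/
def boxes (lam : List ℕ) : Finset (ℕ × ℕ) :=
  (Finset.range lam.length ×ˢ Finset.range (lam.foldr max 0)).filter
    (fun p => p.2 < lam.getD p.1 0)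

/-- Lexicographic order on boxes. -/
def boxLe (p q : ℕ × ℕ) : Prop := p.1 < q.1 ∨ (p.1 = q.1 ∧ p.2 ≤ q.2)

/-- `T` is a composition tableau of shape `lam`. -/
structure IsCompTableau (lam : List ℕ) (T : ℕ × ℕ → ℕ) : Prop where
  pos : ∀ p ∈ boxes lam, 1 ≤ T p
  mono : ∀ p ∈ boxes lam, ∀ q ∈ boxes lam, boxLe p q → T p ≤ T q
  rows : ∀ p ∈ boxes lam, ∀ q ∈ boxes lam, p.1 < q.1 → T p < T q

/-- `T` is a weak composition tableau of shape `lam`: a composition tableau such that,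
additionally, every entry in row `i` is at most `i` (rows here are 0-indexed, so the entries
of row `p.1` are at most `p.1 + 1`). -/
structure IsWeakCompTableau (lam : List ℕ) (T : ℕ × ℕ → ℕ) extends
    IsCompTableau lam T : Prop where
  rowBound : ∀ p ∈ boxes lam, T p ≤ p.1 + 1

/-- `mu` is the content of the tableau `T` of shape `lam`. -/
def HasContent (lam : List ℕ) (T : ℕ × ℕ → ℕ) (mu : List ℕ) : Prop :=
  ∀ i : ℕ, ((boxes lam).filter (fun p => T p = i + 1)).card = mu.getD i 0

/-! ### Auxiliary lemmas -/

/-- `s` is a prefix sum of `l`. -/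
def PS (l : List ℕ) (s : ℕ) : Prop := ∃ m, (l.take m).sum = s

theorem PS_cons (x : ℕ) (t : List ℕ) (s : ℕ) :
    PS (x :: t) s ↔ s = 0 ∨ ∃ s', PS t s' ∧ s = x + s' := by
  constructor
  · rintro ⟨m, rfl⟩
    cases m with
    | zero => exact Or.inl rfl
    | succ m' => exact Or.inr ⟨(t.take m').sum, ⟨m', rfl⟩, by simp⟩
  · rintro (rfl | ⟨s', ⟨m, rfl⟩, rfl⟩)
    · exact ⟨0, rfl⟩
    · exact ⟨m + 1, by simp⟩

theorem PS_zero (l : List ℕ) : PS l 0 := ⟨0, rfl⟩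

theorem flatt_cons_zero (t : List ℕ) : flatt (0 :: t) = flatt t := by simp [flatt]

theorem flatt_cons_pos {x : ℕ} (hx : x ≠ 0) (t : List ℕ) : flatt (x :: t) = x :: flatt t := by
  simp [flatt, List.filter_cons, hx]

theorem PS_flatt (l : List ℕ) (s : ℕ) : PS (flatt l) s ↔ PS l s := by
  induction l generalizing s with
  | nil => simp [flatt]
  | cons x t ih =>
    by_cases hx : x = 0
    · subst hx
      rw [flatt_cons_zero, ih, PS_cons]
      constructor
      · intro h; exact Or.inr ⟨s, h, (zero_add s).symm⟩
      · rintro (rfl | ⟨s', hs', rfl⟩)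
        · exact PS_zero t
        · simpa using hs'
    · rw [flatt_cons_pos hx, PS_cons, PS_cons]
      exact or_congr Iff.rfl (exists_congr fun s' => and_congr_left fun _ => ih s')

theorem flatt_sum (l : List ℕ) : (flatt l).sum = l.sum := by
  induction l with
  | nil => rfl
  | cons x t ih =>
    by_cases hx : x = 0
    · subst hx; rw [flatt_cons_zero, ih]; simp
    · rw [flatt_cons_pos hx, List.sum_cons, List.sum_cons, ih]

theorem flatt_pos (l : List ℕ) : ∀ x ∈ flatt l, 0 < x := by
  intro x hx
  have := List.of_mem_filter hx
  exact Nat.pos_of_ne_zero (by simpa using this)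

theorem sum_take_le (l : List ℕ) (a : ℕ) : (l.take a).sum ≤ l.sum := by
  conv_rhs => rw [← List.take_append_drop a l]
  rw [List.sum_append]; exact Nat.le_add_right _ _

theorem sum_take_mono (l : List ℕ) {a b : ℕ} (h : a ≤ b) : (l.take a).sum ≤ (l.take b).sum := by
  have h2 : l.take a = (l.take b).take a := by rw [List.take_take, Nat.min_eq_left h]
  rw [h2]; exact sum_take_le _ _

theorem sum_take_getD (l : List ℕ) {a : ℕ} (h : a < l.length) :
    (l.take (a+1)).sum = (l.take a).sum + l.getD a 0 := by
  rw [List.sum_take_succ _ _ h, List.getD_eq_getElem _ _ h]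

theorem drop_take_sum (l : List ℕ) {m m' : ℕ} (h : m ≤ m') :
    ((l.drop m).take (m' - m)).sum = (l.take m').sum - (l.take m).sum := by
  have h2 : l.take m' = l.take m ++ (l.drop m).take (m' - m) := by
    rw [← List.take_add, Nat.add_sub_cancel' h]
  rw [h2, List.sum_append, Nat.add_sub_cancel_left]

theorem Refines.ps {a b : List ℕ} (h : Refines a b) : ∀ s, PS b s → PS a s := by
  obtain ⟨L, -, rfl, rfl⟩ := h
  rintro s ⟨r, rfl⟩
  refine ⟨((L.take r).flatten).length, ?_⟩
  have h1 : L.flatten = (L.take r).flatten ++ (L.drop r).flatten := by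
    rw [← List.flatten_append, List.take_append_drop]
  rw [h1, List.take_left, List.sum_flatten, List.map_take]

theorem refines_of_ps : ∀ (b a : List ℕ), (∀ x ∈ a, 0 < x) → (∀ x ∈ b, 0 < x) →
    a.sum = b.sum → (∀ s, PS b s → PS a s) → Refines a b := by
  intro b
  induction b with
  | nil =>
    intro a ha _ hs _
    have : a = [] := by
      cases a with
      | nil => rfl
      | cons x t =>
        exfalso
        have hx : 0 < x := ha x List.mem_cons_self
        simp only [List.sum_cons, List.sum_nil] at hs
        omega
    subst this
    exact ⟨[], by simp, by simp, by simp⟩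
  | cons t b' ih =>
    intro a ha hb hs hps
    have ht : 0 < t := hb t List.mem_cons_self
    obtain ⟨m, hm⟩ := hps t ⟨1, by simp⟩
    have hblock_ne : a.take m ≠ [] := by
      intro hnil; rw [hnil] at hm; simp at hm; omega
    have hdrop_sum : (a.drop m).sum = b'.sum := by
      have : a.sum = (a.take m).sum + (a.drop m).sum := by
        conv_lhs => rw [← List.take_append_drop m a]
        rw [List.sum_append]
      simp only [List.sum_cons] at hs
      omega
    have hdrop_pos : ∀ x ∈ a.drop m, 0 < x := fun x hx => ha x (List.mem_of_mem_drop hx)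
    have hb'_pos : ∀ x ∈ b', 0 < x := fun x hx => hb x (List.mem_cons_of_mem _ hx)
    have hps' : ∀ s, PS b' s → PS (a.drop m) s := by
      rintro s ⟨r, rfl⟩
      by_cases hz : (b'.take r).sum = 0
      · exact ⟨0, by simpa using hz.symm⟩
      · obtain ⟨m', hm'⟩ := hps (t + (b'.take r).sum) ⟨r + 1, by simp⟩
        have hlt : (a.take m).sum < (a.take m').sum := by omega
        have hmm : m < m' := by
          by_contra hc
          exact absurd (sum_take_mono a (Nat.le_of_not_lt hc)) (Nat.not_le_of_lt hlt)
        refine ⟨m' - m, ?_⟩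
        rw [drop_take_sum a (Nat.le_of_lt hmm), hm, hm']
        omega
    obtain ⟨L', hL'ne, hL'fl, hL'map⟩ := ih (a.drop m) hdrop_pos hb'_pos hdrop_sum hps'
    refine ⟨a.take m :: L', ?_, ?_, ?_⟩
    · intro c hc
      rcases List.mem_cons.mp hc with rfl | hc'
      · exact hblock_ne
      · exact hL'ne c hc'
    · simp [hL'fl]
    · simp [hm, hL'map]

/-- least `j` such that `k < (l.take (j+1)).sum`. -/
noncomputable def rIdx (l : List ℕ) (k : ℕ) : ℕ := sInf {j | k < (l.take (j+1)).sum}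

theorem rIdx_spec (l : List ℕ) {k : ℕ} (hk : k < l.sum) :
    (l.take (rIdx l k)).sum ≤ k ∧ k < (l.take (rIdx l k + 1)).sum ∧ rIdx l k < l.length := by
  have hne : {j | k < (l.take (j+1)).sum}.Nonempty := by
    refine ⟨l.length, ?_⟩
    simpa [List.take_of_length_le (Nat.le_succ _)] using hk
  have hmem := Nat.sInf_mem hne
  have hlen : rIdx l k < l.length := by
    by_contra hc
    push_neg at hc
    rcases Nat.eq_zero_or_pos l.length with h0 | h0
    · have : l = [] := List.length_eq_zero_iff.mp h0
      subst this; simp at hk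
    · have h1 : l.length - 1 ∈ {j | k < (l.take (j+1)).sum} := by
        show k < (l.take (l.length - 1 + 1)).sum
        rw [Nat.sub_add_cancel h0, List.take_length]; exact hk
      have h2 : rIdx l k ≤ l.length - 1 := Nat.sInf_le h1
      omega
  refine ⟨?_, hmem, hlen⟩
  rcases Nat.eq_zero_or_pos (rIdx l k) with h0 | h0
  · rw [h0]; simp
  · by_contra hc
    push_neg at hc
    have : rIdx l k - 1 ∈ {j | k < (l.take (j+1)).sum} := by
      simpa [Nat.sub_add_cancel h0] using hc
    have h3 : rIdx l k ≤ rIdx l k - 1 := Nat.sInf_le this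
    omega

theorem rIdx_eq_iff (l : List ℕ) {k j : ℕ} (hk : k < l.sum) :
    rIdx l k = j ↔ (l.take j).sum ≤ k ∧ k < (l.take (j+1)).sum := by
  constructor
  · rintro rfl; exact ⟨(rIdx_spec l hk).1, (rIdx_spec l hk).2.1⟩
  · rintro ⟨h1, h2⟩
    obtain ⟨s1, s2, -⟩ := rIdx_spec l hk
    have hle : rIdx l k ≤ j := Nat.sInf_le h2
    by_contra hc
    have hlt : rIdx l k < j := lt_of_le_of_ne hle hc
    have : (l.take (rIdx l k + 1)).sum ≤ (l.take j).sum := sum_take_mono l hlt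
    omega

theorem rIdx_mono (l : List ℕ) {k k' : ℕ} (h : k ≤ k') (hk' : k' < l.sum) :
    rIdx l k ≤ rIdx l k' := by
  have h2 := (rIdx_spec l hk').2.1
  exact Nat.sInf_le (lt_of_le_of_lt h h2)

theorem rIdx_cross (l : List ℕ) {k k' s : ℕ} (hk' : k' < l.sum)
    (hps : ∃ m, (l.take m).sum = s) (h1 : k < s) (h2 : s ≤ k') :
    rIdx l k < rIdx l k' := by
  obtain ⟨m, rfl⟩ := hps
  have hm : 0 < m := by
    rcases Nat.eq_zero_or_pos m with h0 | h0
    · subst h0; simp at h1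
    · exact h0
  have ha : rIdx l k ≤ m - 1 := by
    refine Nat.sInf_le ?_
    show k < (l.take (m - 1 + 1)).sum
    rwa [Nat.sub_add_cancel hm]
  have hb : (l.take m).sum < (l.take (rIdx l k' + 1)).sum :=
    lt_of_le_of_lt h2 (rIdx_spec l hk').2.1
  have : m < rIdx l k' + 1 := by
    by_contra hc
    exact absurd (sum_take_mono l (Nat.le_of_not_lt hc)) (Nat.not_le_of_lt hb)
  omega

theorem mem_le_foldr_max {l : List ℕ} {x : ℕ} (h : x ∈ l) : x ≤ l.foldr max 0 := by
  induction l with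
  | nil => simp at h
  | cons y t ih =>
    rcases List.mem_cons.mp h with rfl | h'
    · exact le_max_left _ _
    · exact le_trans (ih h') (le_max_right _ _)

theorem mem_boxes {lam : List ℕ} {p : ℕ × ℕ} :
    p ∈ boxes lam ↔ p.1 < lam.length ∧ p.2 < lam.getD p.1 0 := by
  simp only [boxes, Finset.mem_filter, Finset.mem_product, Finset.mem_range]
  constructor
  · rintro ⟨⟨h1, -⟩, h3⟩; exact ⟨h1, h3⟩
  · rintro ⟨h1, h3⟩
    refine ⟨⟨h1, lt_of_lt_of_le h3 (mem_le_foldr_max ?_)⟩, h3⟩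
    rw [List.getD_eq_getElem _ _ h1]; exact List.getElem_mem _

/-- position of a box in the lexicographic enumeration. -/
def bpos (lam : List ℕ) (p : ℕ × ℕ) : ℕ := (lam.take p.1).sum + p.2

theorem bpos_lt {lam : List ℕ} {p : ℕ × ℕ} (hp : p ∈ boxes lam) :
    bpos lam p < (lam.take (p.1 + 1)).sum ∧ bpos lam p < lam.sum := by
  obtain ⟨h1, h2⟩ := mem_boxes.mp hp
  have := sum_take_getD lam h1
  constructor
  · unfold bpos; omega
  · have := sum_take_le lam (p.1 + 1); unfold bpos; omega

theorem card_boxes_filter (lam : List ℕ) (P : ℕ → Prop) [DecidablePred P] :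
    ((boxes lam).filter (fun p => P (bpos lam p))).card
      = ((Finset.range lam.sum).filter P).card := by
  refine Finset.card_bij' (fun p _ => bpos lam p)
    (fun k _ => (rIdx lam k, k - (lam.take (rIdx lam k)).sum)) ?_ ?_ ?_ ?_
  · intro p hp
    obtain ⟨hp1, hp2⟩ := Finset.mem_filter.mp hp
    exact Finset.mem_filter.mpr ⟨Finset.mem_range.mpr (bpos_lt hp1).2, hp2⟩
  · intro k hk
    obtain ⟨hk1, hk2⟩ := Finset.mem_filter.mp hk
    have hks : k < lam.sum := Finset.mem_range.mp hk1
    obtain ⟨s1, s2, s3⟩ := rIdx_spec lam hks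
    refine Finset.mem_filter.mpr ⟨mem_boxes.mpr ⟨s3, ?_⟩, ?_⟩
    · have := sum_take_getD lam s3; simp only; omega
    · show P (bpos lam (rIdx lam k, k - (lam.take (rIdx lam k)).sum))
      have : bpos lam (rIdx lam k, k - (lam.take (rIdx lam k)).sum) = k := by
        unfold bpos; simp only; omega
      rwa [this]
  · intro p hp
    obtain ⟨hp1, -⟩ := Finset.mem_filter.mp hp
    obtain ⟨h1, h2⟩ := mem_boxes.mp hp1
    have hk : bpos lam p < lam.sum := (bpos_lt hp1).2
    have hr : rIdx lam (bpos lam p) = p.1 := by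
      rw [rIdx_eq_iff lam hk]
      exact ⟨Nat.le_add_right _ _, (bpos_lt hp1).1⟩
    ext
    · exact hr
    · show (bpos lam p) - (lam.take (rIdx lam (bpos lam p))).sum = p.2
      rw [hr]; unfold bpos; omega
  · intro k hk
    obtain ⟨hk1, -⟩ := Finset.mem_filter.mp hk
    have hks : k < lam.sum := Finset.mem_range.mp hk1
    obtain ⟨s1, -, -⟩ := rIdx_spec lam hks
    show bpos lam _ = k
    unfold bpos; simp only; omega

theorem sum_take_eq_range_sum (l : List ℕ) (i : ℕ) :
    (l.take i).sum = ∑ j ∈ Finset.range i, l.getD j 0 := by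
  induction i with
  | zero => simp
  | succ i ih =>
    rw [Finset.sum_range_succ, ← ih]
    by_cases h : i < l.length
    · exact sum_take_getD l h
    · push_neg at h
      rw [List.take_of_length_le h, List.take_of_length_le (le_trans h (Nat.le_succ _)),
        List.getD_eq_default _ _ h]
      omega

theorem card_filter_le_partition (lam : List ℕ) (T : ℕ × ℕ → ℕ)
    (hpos : ∀ p ∈ boxes lam, 1 ≤ T p) (i : ℕ) :
    ((boxes lam).filter (fun p => T p ≤ i)).card
      = ∑ j ∈ Finset.range i, ((boxes lam).filter (fun p => T p = j + 1)).card := by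
  induction i with
  | zero =>
    rw [Finset.sum_range_zero, Finset.card_eq_zero]
    refine Finset.filter_eq_empty_iff.mpr ?_
    intro p hp
    have := hpos p hp
    omega
  | succ i ih =>
    rw [Finset.sum_range_succ, ← ih]
    have hsplit : ((boxes lam).filter (fun p => T p ≤ i + 1))
        = ((boxes lam).filter (fun p => T p ≤ i)) ∪ ((boxes lam).filter (fun p => T p = i + 1)) := by
      rw [← Finset.filter_or]
      apply Finset.filter_congr
      intro p _
      constructor
      · intro h; omega
      · intro h; omega
    have hdisj : Disjoint ((boxes lam).filter (fun p => T p ≤ i))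
        ((boxes lam).filter (fun p => T p = i + 1)) := by
      rw [Finset.disjoint_left]
      intro p hp1 hp2
      have h1 := (Finset.mem_filter.mp hp1).2
      have h2 := (Finset.mem_filter.mp hp2).2
      omega
    rw [hsplit, Finset.card_union_of_disjoint hdisj]

theorem card_range_filter_lt (n c : ℕ) (h : c ≤ n) :
    ((Finset.range n).filter (fun k => k < c)).card = c := by
  have : (Finset.range n).filter (fun k => k < c) = Finset.range c := by
    ext k
    simp only [Finset.mem_filter, Finset.mem_range]
    omega
  rw [this, Finset.card_range]

theorem card_boxes_rows_lt (lam : List ℕ) (i : ℕ) :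
    ((boxes lam).filter (fun p => p.1 < i)).card = (lam.take i).sum := by
  have h1 : ((boxes lam).filter (fun p => p.1 < i))
      = ((boxes lam).filter (fun p => bpos lam p < (lam.take i).sum)) := by
    apply Finset.filter_congr
    intro p hp
    constructor
    · intro h
      calc bpos lam p < (lam.take (p.1 + 1)).sum := (bpos_lt hp).1
        _ ≤ (lam.take i).sum := sum_take_mono lam h
    · intro h
      by_contra hc
      push_neg at hc
      have h2 : (lam.take i).sum ≤ (lam.take p.1).sum := sum_take_mono lam hc
      have : (lam.take p.1).sum ≤ bpos lam p := Nat.le_add_right _ _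
      omega
  rw [h1, card_boxes_filter lam (fun k => k < (lam.take i).sum),
    card_range_filter_lt _ _ (sum_take_le lam i)]

theorem weak_composition_tableau_content_iff (lam mu : List ℕ)
    (hsum : lam.sum = mu.sum) :
    (∃ T : ℕ × ℕ → ℕ, IsWeakCompTableau lam T ∧ HasContent lam T mu) ↔
      (Refines (flatt mu) (flatt lam) ∧ Dominates mu lam) := by
  constructor
  · rintro ⟨T, hT, hC⟩
    have hcardle : ∀ i : ℕ, ((boxes lam).filter (fun p => T p ≤ i)).card = (mu.take i).sum := by
      intro i
      rw [card_filter_le_partition lam T hT.pos i, sum_take_eq_range_sum]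
      exact Finset.sum_congr rfl fun j _ => hC j
    constructor
    · -- refinement
      refine refines_of_ps _ _ (flatt_pos mu) (flatt_pos lam) (by rw [flatt_sum, flatt_sum, hsum]) ?_
      intro s hs
      rw [PS_flatt] at hs ⊢
      obtain ⟨r, rfl⟩ := hs
      set F := (boxes lam).filter (fun p => p.1 < r) with hF
      set m := F.sup T with hm
      have hFeq : (boxes lam).filter (fun p => T p ≤ m) = F := by
        apply Finset.Subset.antisymm
        · intro q hq
          obtain ⟨hq1, hq2⟩ := Finset.mem_filter.mp hq
          rcases F.eq_empty_or_nonempty with hFe | hFne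
          · exfalso
            rw [hm, hFe] at hq2
            simp only [Finset.sup_empty, le_bot_iff, bot_eq_zero] at hq2
            have := hT.pos q hq1
            omega
          · obtain ⟨p0, hp0, hp0T⟩ := Finset.exists_mem_eq_sup F hFne T
            obtain ⟨hp01, hp02⟩ := Finset.mem_filter.mp hp0
            refine Finset.mem_filter.mpr ⟨hq1, ?_⟩
            by_contra hc
            push_neg at hc
            have := hT.rows p0 hp01 q hq1 (lt_of_lt_of_le hp02 hc)
            rw [hm, hp0T] at hq2
            omega
        · intro p hp
          obtain ⟨hp1, -⟩ := Finset.mem_filter.mp hp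
          exact Finset.mem_filter.mpr ⟨hp1, Finset.le_sup hp⟩
      refine ⟨m, ?_⟩
      rw [← hcardle m, hFeq, hF, card_boxes_rows_lt]
    · -- dominance
      intro i
      rw [← hcardle i, ← card_boxes_rows_lt lam i]
      apply Finset.card_le_card
      intro p hp
      obtain ⟨hp1, hp2⟩ := Finset.mem_filter.mp hp
      refine Finset.mem_filter.mpr ⟨hp1, ?_⟩
      have := hT.rowBound p hp1
      omega
  · rintro ⟨href, hdom⟩
    have hps : ∀ s, PS lam s → PS mu s := by
      intro s hs
      exact (PS_flatt mu s).mp (href.ps s ((PS_flatt lam s).mpr hs))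
    refine ⟨fun p => rIdx mu (bpos lam p) + 1, ⟨⟨?_, ?_, ?_⟩, ?_⟩, ?_⟩
    · intro p _; omega
    · intro p hp q hq hle
      have hq' : bpos lam q < mu.sum := by rw [← hsum]; exact (bpos_lt hq).2
      have hb : bpos lam p ≤ bpos lam q := by
        rcases hle with h | ⟨h1, h2⟩
        · have := (bpos_lt hp).1
          have h2 : (lam.take (p.1 + 1)).sum ≤ (lam.take q.1).sum := sum_take_mono lam h
          have : (lam.take q.1).sum ≤ bpos lam q := Nat.le_add_right _ _
          unfold bpos at *; omega
        · unfold bpos; rw [h1]; omega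
      exact Nat.add_le_add_right (rIdx_mono mu hb hq') 1
    · intro p hp q hq hlt
      have hq' : bpos lam q < mu.sum := by rw [← hsum]; exact (bpos_lt hq).2
      have h1 : bpos lam p < (lam.take q.1).sum :=
        lt_of_lt_of_le (bpos_lt hp).1 (sum_take_mono lam hlt)
      have h2 : (lam.take q.1).sum ≤ bpos lam q := Nat.le_add_right _ _
      have := rIdx_cross mu hq' (hps _ ⟨q.1, rfl⟩) h1 h2
      omega
    · intro p hp
      have h1 : bpos lam p < (mu.take (p.1 + 1)).sum :=
        lt_of_lt_of_le (bpos_lt hp).1 (hdom (p.1 + 1))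
      have h2 : rIdx mu (bpos lam p) ≤ p.1 := Nat.sInf_le h1
      omega
    · intro i
      have hfe : (boxes lam).filter (fun p => rIdx mu (bpos lam p) + 1 = i + 1)
          = (boxes lam).filter
              (fun p => (mu.take i).sum ≤ bpos lam p ∧ bpos lam p < (mu.take (i+1)).sum) := by
        apply Finset.filter_congr
        intro p hp
        have hk : bpos lam p < mu.sum := by rw [← hsum]; exact (bpos_lt hp).2
        constructor
        · intro h
          exact (rIdx_eq_iff mu hk).mp (by omega)
        · intro h
          have := (rIdx_eq_iff mu hk).mpr h
          omega
      rw [hfe, card_boxes_filter lam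
        (fun k => (mu.take i).sum ≤ k ∧ k < (mu.take (i+1)).sum)]
      have hico : (Finset.range lam.sum).filter
          (fun k => (mu.take i).sum ≤ k ∧ k < (mu.take (i+1)).sum)
          = Finset.Ico (mu.take i).sum (mu.take (i+1)).sum := by
        ext k
        simp only [Finset.mem_filter, Finset.mem_range, Finset.mem_Ico]
        have := sum_take_le mu (i+1)
        constructor
        · intro ⟨_, h2, h3⟩; exact ⟨h2, h3⟩
        · intro ⟨h2, h3⟩; exact ⟨by omega, h2, h3⟩
      rw [hico, Nat.card_Ico]
      by_cases h : i < mu.length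
      · rw [sum_take_getD mu h]; omega
      · push_neg at h
        rw [List.take_of_length_le h, List.take_of_length_le (le_trans h (Nat.le_succ _)),
          List.getD_eq_default _ _ h]
        omega
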